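/- Let N ∈ sp(n,ℂ) with N² = 0 and Re Q_N ≥ 0 (i.e. Re σ(v, Nv) ≥ 0 for all v ∈ ℝ^{2n}). Write N = N₁ + iN₂ with N₁, N₂ real. Then N₁² = N₂² = N₁N₂ = N₂N₁ = 0; in particular N₁ and N₂ are each 2-step nilpotent real Hamiltonian maps. -/
import Mathlib


open MeasureTheory Complex Matrix

noncomputable section

/-- Index type for `2n`-dimensional (symplectic) vectors: `X`-coordinates `inl j`,
`Y`-coordinates `inr j`. -/
abbrev Idx (n : ℕ) := Fin n ⊕ Fin n

/-- The standard symplectic matrix `J = [[0, I],[-I, 0]]` over `ℂ`. -/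
def Jmat (n : ℕ) : Matrix (Idx n) (Idx n) ℂ := Matrix.fromBlocks 0 1 (-1) 0

/-- The standard symplectic matrix `J = [[0, I],[-I, 0]]` over `ℝ`. -/
def JmatR (n : ℕ) : Matrix (Idx n) (Idx n) ℝ := Matrix.fromBlocks 0 1 (-1) 0

/-- The standard symplectic form `σ(z,w) = ᵗz J w` on `ℂ^{2n}`. -/
def sigmaC (n : ℕ) (z w : Idx n → ℂ) : ℂ := z ⬝ᵥ (Jmat n).mulVec w

/-- The standard symplectic form on `ℝ^{2n}`. -/
def sigmaR (n : ℕ) (v w : Idx n → ℝ) : ℝ := v ⬝ᵥ (JmatR n).mulVec w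

/-- Inclusion of real vectors into `ℂ^{2n}`. -/
def realVec (n : ℕ) (v : Idx n → ℝ) : Idx n → ℂ := fun i => (v i : ℂ)

/-- Complex conjugation on `ℂ^{2n}` relative to the real form `ℝ^{2n}`. -/
def conjVec (n : ℕ) (z : Idx n → ℂ) : Idx n → ℂ := fun i => (starRingEnd ℂ) (z i)

/-- `S ∈ sp(n, ℂ)`, i.e. `σ(Sz, w) + σ(z, Sw) = 0` for all `z, w`. -/
def InSp (n : ℕ) (S : Matrix (Idx n) (Idx n) ℂ) : Prop := Sᵀ * Jmat n + Jmat n * S = 0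

/-- `Re Q_S ≥ 0`: the real part of the quadratic form `Q_S(v) = σ(v, Sv)` is
positive semi-definite on `ℝ^{2n}`. -/
def RePosQ (n : ℕ) (S : Matrix (Idx n) (Idx n) ℂ) : Prop :=
  ∀ v : Idx n → ℝ, 0 ≤ (sigmaC n (realVec n v) (S.mulVec (realVec n v))).re

/-- The generalized eigenspace `V_μ` of the matrix `S` for the eigenvalue `μ`. -/
def genEig (n : ℕ) (S : Matrix (Idx n) (Idx n) ℂ) (μ : ℂ) : Submodule ℂ (Idx n → ℂ) :=
  Module.End.maxGenEigenspace (Matrix.mulVecLin S) μ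

/-- `V_r`: the sum of the generalized eigenspaces of `S` for real eigenvalues. -/
def Vreal (n : ℕ) (S : Matrix (Idx n) (Idx n) ℂ) : Submodule ℂ (Idx n → ℂ) :=
  ⨆ lam : ℝ, genEig n S (lam : ℂ)

/-- `V_i`: the sum of the generalized eigenspaces of `S` for non-real eigenvalues. -/
def Vimag (n : ℕ) (S : Matrix (Idx n) (Idx n) ℂ) : Submodule ℂ (Idx n → ℂ) :=
  ⨆ μ : {z : ℂ // z.im ≠ 0}, genEig n S (μ : ℂ)

/-- `Sr` is the "real part" `S_r` of `S`: it agrees with `S` on `V_r` and vanishes on `V_i`. -/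
def IsRealPart (n : ℕ) (S Sr : Matrix (Idx n) (Idx n) ℂ) : Prop :=
  (∀ v ∈ Vreal n S, Sr.mulVec v = S.mulVec v) ∧ ∀ v ∈ Vimag n S, Sr.mulVec v = 0

/-- `Si` is the "imaginary part" `S_i` of `S`: it vanishes on `V_r` and agrees with `S`
on `V_i`. -/
def IsImagPart (n : ℕ) (S Si : Matrix (Idx n) (Idx n) ℂ) : Prop :=
  (∀ v ∈ Vreal n S, Si.mulVec v = 0) ∧ ∀ v ∈ Vimag n S, Si.mulVec v = S.mulVec v

/-- Condition (R): `V_λ ⊕ V_{−λ}` is invariant under complex conjugation for every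
real `λ ≠ 0`. -/
def CondR (n : ℕ) (S : Matrix (Idx n) (Idx n) ℂ) : Prop :=
  ∀ lam : ℝ, lam ≠ 0 →
    ∀ z ∈ genEig n S (lam : ℂ) ⊔ genEig n S (-(lam : ℂ)),
      conjVec n z ∈ genEig n S (lam : ℂ) ⊔ genEig n S (-(lam : ℂ))

/-- `ν = Σ_j ν_j`: the sum of the imaginary parts of the eigenvalues of `S` lying in the
upper half plane, counted with multiplicity. -/
def nuTotal (n : ℕ) (S : Matrix (Idx n) (Idx n) ℂ) : ℝ :=
  (S.charpoly.roots.map (fun z => max z.im 0)).sum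

/-- `S_i ≠ 0`, i.e. `S` has at least one non-real eigenvalue. -/
def HasNonrealEig (n : ℕ) (S : Matrix (Idx n) (Idx n) ℂ) : Prop :=
  ∃ z ∈ S.charpoly.roots, z.im ≠ 0

/-- Semisimple (= diagonalizable over `ℂ`) matrix. -/
def IsSemisimpleMat (n : ℕ) (D : Matrix (Idx n) (Idx n) ℂ) : Prop :=
  ∃ (P : Matrix (Idx n) (Idx n) ℂ) (d : Idx n → ℂ), IsUnit P ∧ D = P * Matrix.diagonal d * P⁻¹

/-- `S = D + N` is the Jordan decomposition of `S`: `D` semisimple, `N` nilpotent,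
`DN = ND`. -/
def IsJordanDecomp (n : ℕ) (S D N : Matrix (Idx n) (Idx n) ℂ) : Prop :=
  S = D + N ∧ IsSemisimpleMat n D ∧ IsNilpotent N ∧ D * N = N * D

namespace Statement11Aux

open Matrix Complex

/-- Symmetry swap for dot products against a symmetric matrix. -/
lemma dot_symm {m : Type*} [Fintype m] (M : Matrix m m ℝ) (hsym : Mᵀ = M)
    (x y : m → ℝ) : x ⬝ᵥ M.mulVec y = y ⬝ᵥ M.mulVec x := by
  rw [Matrix.dotProduct_mulVec, ← Matrix.mulVec_transpose, hsym, dotProduct_comm]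

/-- A PSD symmetric real matrix kills any null vector of its quadratic form. -/
lemma psd_ker {m : Type*} [Fintype m] [DecidableEq m] (M : Matrix m m ℝ) (hsym : Mᵀ = M)
    (hpos : ∀ v, 0 ≤ v ⬝ᵥ M.mulVec v) (x : m → ℝ) (hx : x ⬝ᵥ M.mulVec x = 0) :
    M.mulVec x = 0 := by
  have key : ∀ w : m → ℝ, w ⬝ᵥ M.mulVec x = 0 := by
    intro w
    have hq : ∀ t : ℝ, 0 ≤ (w ⬝ᵥ M.mulVec w) * (t * t) + (2 * (w ⬝ᵥ M.mulVec x)) * t + 0 := by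
      intro t
      have h := hpos (x + t • w)
      have hswap := dot_symm M hsym x w
      simp only [Matrix.mulVec_add, Matrix.mulVec_smul, dotProduct_add, add_dotProduct,
        dotProduct_smul, smul_dotProduct, smul_eq_mul] at h
      rw [hx, hswap] at h
      set a := w ⬝ᵥ M *ᵥ w
      set b := w ⬝ᵥ M *ᵥ x
      nlinarith [h]
    have hd := discrim_le_zero hq
    have h2 : (2 * (w ⬝ᵥ M.mulVec x)) ^ 2 ≤ 0 := by
      simpa [discrim] using hd
    nlinarith [sq_nonneg (w ⬝ᵥ M.mulVec x)]
  funext i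
  have := key (Pi.single i 1)
  simpa [single_dotProduct] using this

lemma eq_zero_of_mulVec {m : Type*} [Fintype m] [DecidableEq m] (M : Matrix m m ℝ)
    (h : ∀ v, M.mulVec v = 0) : M = 0 := by
  ext i j
  have := congrFun (h (Pi.single j 1)) i
  simpa [Matrix.mulVec_single] using this

/-- Splitting of a complex matrix into real and imaginary parts. -/
lemma split {m : Type*} (M : Matrix m m ℂ) :
    M = (M.map Complex.re).map (Complex.ofRealHom : ℝ →+* ℂ)
        + Complex.I • (M.map Complex.im).map (Complex.ofRealHom : ℝ →+* ℂ) := by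
  ext i j
  simp only [Matrix.add_apply, Matrix.smul_apply, Matrix.map_apply, Complex.ofRealHom_eq_coe,
    smul_eq_mul]
  rw [mul_comm, Complex.re_add_im]

lemma split_unique {m : Type*} (M : Matrix m m ℂ) (P Q : Matrix m m ℝ)
    (h : M = P.map (Complex.ofRealHom : ℝ →+* ℂ)
        + Complex.I • Q.map (Complex.ofRealHom : ℝ →+* ℂ)) :
    M.map Complex.re = P ∧ M.map Complex.im = Q := by
  constructor <;> ext i j <;>
  · have hij : M i j = (P i j : ℂ) + Complex.I * (Q i j : ℂ) := by
      rw [h]; simp [Matrix.add_apply, Matrix.smul_apply, Matrix.map_apply, smul_eq_mul]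
    simp [Matrix.map_apply, hij, Complex.add_re, Complex.add_im, Complex.mul_re, Complex.mul_im]

end Statement11Aux

namespace Statement11Aux

open Matrix Complex

lemma map_add' {m : Type*} (P Q : Matrix m m ℝ) :
    (P + Q).map (⇑(Complex.ofRealHom : ℝ →+* ℂ)) =
      P.map (⇑(Complex.ofRealHom : ℝ →+* ℂ)) + Q.map (⇑(Complex.ofRealHom : ℝ →+* ℂ)) := by
  ext i j; simp

lemma map_sub' {m : Type*} (P Q : Matrix m m ℝ) :
    (P - Q).map (⇑(Complex.ofRealHom : ℝ →+* ℂ)) =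
      P.map (⇑(Complex.ofRealHom : ℝ →+* ℂ)) - Q.map (⇑(Complex.ofRealHom : ℝ →+* ℂ)) := by
  ext i j; simp

lemma map_neg' {m : Type*} (P : Matrix m m ℝ) :
    (-P).map (⇑(Complex.ofRealHom : ℝ →+* ℂ)) = -(P.map (⇑(Complex.ofRealHom : ℝ →+* ℂ))) := by
  ext i j; simp

lemma J_mul_J {R : Type*} [CommRing R] {k : Type*} [Fintype k] [DecidableEq k] :
    (Matrix.fromBlocks (0 : Matrix k k R) (1 : Matrix k k R) (-1 : Matrix k k R)
        (0 : Matrix k k R)) *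
      Matrix.fromBlocks (0 : Matrix k k R) (1 : Matrix k k R) (-1 : Matrix k k R)
        (0 : Matrix k k R) = -1 := by
  rw [Matrix.fromBlocks_multiply]
  have h1 : (-1 : Matrix (k ⊕ k) (k ⊕ k) R)
      = Matrix.fromBlocks (-1 : Matrix k k R) 0 0 (-1 : Matrix k k R) := by
    have h2 : (1 : Matrix (k ⊕ k) (k ⊕ k) R)
        = Matrix.fromBlocks (1 : Matrix k k R) 0 0 (1 : Matrix k k R) :=
      Matrix.fromBlocks_one.symm
    calc (-1 : Matrix (k ⊕ k) (k ⊕ k) R)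
        = -(Matrix.fromBlocks (1 : Matrix k k R) 0 0 (1 : Matrix k k R)) := by rw [← h2]
      _ = Matrix.fromBlocks (-1 : Matrix k k R) 0 0 (-1 : Matrix k k R) := by
          rw [Matrix.fromBlocks_neg, neg_zero]
  rw [h1]
  congr 1 <;> simp

lemma J_transpose {R : Type*} [CommRing R] {k : Type*} [DecidableEq k] :
    (Matrix.fromBlocks (0 : Matrix k k R) (1 : Matrix k k R) (-1 : Matrix k k R)
        (0 : Matrix k k R))ᵀ
      = -(Matrix.fromBlocks (0 : Matrix k k R) (1 : Matrix k k R) (-1 : Matrix k k R)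
        (0 : Matrix k k R)) := by
  rw [Matrix.fromBlocks_transpose, Matrix.fromBlocks_neg]
  congr 1 <;> simp

end Statement11Aux

lemma jmatR_map (n : ℕ) :
    (JmatR n).map (⇑(Complex.ofRealHom : ℝ →+* ℂ)) = Jmat n := by
  ext i j
  rcases i with i | i <;> rcases j with j | j <;>
    simp [JmatR, Jmat, Matrix.map_apply, Matrix.one_apply, apply_ite]

/-- if `N ∈ sp(n,ℂ)`, `N² = 0` and `Re Q_N ≥ 0`, then
`N₁² = N₂² = N₁N₂ = N₂N₁ = 0`; in particular `N₁` and `N₂` are 2-step nilpotent real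
Hamiltonian maps. -/
theorem statement11 (n : ℕ) (N : Matrix (Idx n) (Idx n) ℂ)
    (hN : InSp n N) (hN2 : N * N = 0) (hpos : RePosQ n N) :
    (N.map Complex.re) * (N.map Complex.re) = 0 ∧
    (N.map Complex.im) * (N.map Complex.im) = 0 ∧
    (N.map Complex.re) * (N.map Complex.im) = 0 ∧
    (N.map Complex.im) * (N.map Complex.re) = 0 ∧
    (N.map Complex.re)ᵀ * JmatR n + JmatR n * (N.map Complex.re) = 0 ∧
    (N.map Complex.im)ᵀ * JmatR n + JmatR n * (N.map Complex.im) = 0 := by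
  classical
  set f : ℝ →+* ℂ := Complex.ofRealHom with hf
  have hJJ : Jmat n * Jmat n = -1 := by rw [Jmat]; exact Statement11Aux.J_mul_J
  have hJRJR : JmatR n * JmatR n = -1 := by rw [JmatR]; exact Statement11Aux.J_mul_J
  have hJT : (Jmat n)ᵀ = -(Jmat n) := by rw [Jmat]; exact Statement11Aux.J_transpose
  have hJRT : (JmatR n)ᵀ = -(JmatR n) := by rw [JmatR]; exact Statement11Aux.J_transpose
  have hJR : (JmatR n).map (⇑f) = Jmat n := jmatR_map n
  set A : Matrix (Idx n) (Idx n) ℂ := Jmat n * N with hAdef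
  set A1 : Matrix (Idx n) (Idx n) ℝ := A.map Complex.re with hA1def
  set A2 : Matrix (Idx n) (Idx n) ℝ := A.map Complex.im with hA2def
  have hNJ : Nᵀ * Jmat n = -(Jmat n * N) := by
    have h := hN
    rw [InSp] at h
    exact eq_neg_of_add_eq_zero_left h
  have hAT : Aᵀ = A := by
    calc Aᵀ = (Jmat n * N)ᵀ := by rw [hAdef]
      _ = Nᵀ * (Jmat n)ᵀ := Matrix.transpose_mul _ _
      _ = -(Nᵀ * Jmat n) := by rw [hJT, Matrix.mul_neg]
      _ = Jmat n * N := by rw [hNJ, neg_neg]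
      _ = A := by rw [hAdef]
  have hA1T : A1ᵀ = A1 := by
    rw [hA1def, ← Matrix.transpose_map, hAT]
  have hA2T : A2ᵀ = A2 := by
    rw [hA2def, ← Matrix.transpose_map, hAT]
  have hsplitA : A = A1.map (⇑f) + Complex.I • A2.map (⇑f) := by
    rw [hA1def, hA2def]
    exact Statement11Aux.split A
  -- positivity of the real part of the quadratic form
  have hform : ∀ v : Idx n → ℝ,
      (sigmaC n (realVec n v) (N.mulVec (realVec n v))).re = v ⬝ᵥ A1.mulVec v := by
    intro v
    rw [sigmaC, Matrix.mulVec_mulVec, ← hAdef, hA1def]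
    simp [dotProduct, Matrix.mulVec, realVec, Matrix.map_apply, Complex.re_sum,
      Complex.im_sum, Complex.mul_re, Complex.mul_im]
  have hpos1 : ∀ v : Idx n → ℝ, 0 ≤ v ⬝ᵥ A1.mulVec v := by
    intro v
    rw [← hform v]
    exact hpos v
  -- the key kernel step
  have key : ∀ x y : Idx n → ℝ, A1.mulVec x = A2.mulVec y → A1.mulVec y = -(A2.mulVec x) →
      A1.mulVec x = 0 ∧ A1.mulVec y = 0 := by
    intro x y hx hy
    have hsum : x ⬝ᵥ A1.mulVec x + y ⬝ᵥ A1.mulVec y = 0 := by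
      rw [hx, hy, dotProduct_neg, Statement11Aux.dot_symm A2 hA2T x y]
      ring
    have hxx : x ⬝ᵥ A1.mulVec x = 0 := le_antisymm (by linarith [hpos1 y]) (hpos1 x)
    have hyy : y ⬝ᵥ A1.mulVec y = 0 := le_antisymm (by linarith [hpos1 x]) (hpos1 y)
    exact ⟨Statement11Aux.psd_ker A1 hA1T hpos1 x hxx,
      Statement11Aux.psd_ker A1 hA1T hpos1 y hyy⟩
  -- N² = 0 gives A J A = 0
  have hC : A * Jmat n * A = 0 := by
    rw [hAdef]
    calc Jmat n * N * Jmat n * (Jmat n * N)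
        = Jmat n * (N * (Jmat n * Jmat n * N)) := by simp only [Matrix.mul_assoc]
      _ = 0 := by rw [hJJ]; simp [hN2]
  -- expansion of A J A into real and imaginary parts
  have hexp : A * Jmat n * A
      = (A1 * JmatR n * A1 - A2 * JmatR n * A2).map (⇑f)
        + Complex.I • ((A1 * JmatR n * A2 + A2 * JmatR n * A1).map (⇑f)) := by
    conv_lhs => rw [hsplitA, ← hJR]
    rw [Statement11Aux.map_sub', Statement11Aux.map_add']
    simp only [Matrix.add_mul, Matrix.mul_add, Matrix.smul_mul, Matrix.mul_smul,
      smul_smul, Complex.I_mul_I, ← Matrix.map_mul, neg_one_smul, smul_add]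
    abel
  obtain ⟨hre0, him0⟩ := Statement11Aux.split_unique (A * Jmat n * A) _ _ hexp
  rw [hC] at hre0 him0
  have hzre : ((0 : Matrix (Idx n) (Idx n) ℂ).map Complex.re) = 0 := by ext i j; simp
  have hzim : ((0 : Matrix (Idx n) (Idx n) ℂ).map Complex.im) = 0 := by ext i j; simp
  rw [hzre] at hre0
  rw [hzim] at him0
  have hR1 : A1 * JmatR n * A1 = A2 * JmatR n * A2 := by
    have := hre0.symm
    exact sub_eq_zero.mp this
  have hR2 : A1 * JmatR n * A2 = -(A2 * JmatR n * A1) := by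
    exact eq_neg_of_add_eq_zero_left him0.symm
  -- the four real identities
  have hz1z2 : ∀ v : Idx n → ℝ,
      (A1 * (JmatR n * A1)).mulVec v = 0 ∧ (A1 * (JmatR n * A2)).mulVec v = 0 := by
    intro v
    have h := key ((JmatR n * A1).mulVec v) ((JmatR n * A2).mulVec v)
      (by rw [Matrix.mulVec_mulVec, Matrix.mulVec_mulVec, ← mul_assoc A1 (JmatR n) A1,
            ← mul_assoc A2 (JmatR n) A2, hR1])
      (by rw [Matrix.mulVec_mulVec, Matrix.mulVec_mulVec, ← mul_assoc A1 (JmatR n) A2,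
            ← mul_assoc A2 (JmatR n) A1, hR2, Matrix.neg_mulVec])
    constructor
    · rw [← Matrix.mulVec_mulVec]; exact h.1
    · rw [← Matrix.mulVec_mulVec]; exact h.2
  have z1 : A1 * JmatR n * A1 = 0 := by
    rw [mul_assoc]
    exact Statement11Aux.eq_zero_of_mulVec _ (fun v => (hz1z2 v).1)
  have z2 : A1 * JmatR n * A2 = 0 := by
    rw [mul_assoc]
    exact Statement11Aux.eq_zero_of_mulVec _ (fun v => (hz1z2 v).2)
  have z3 : A2 * JmatR n * A2 = 0 := by rw [← hR1]; exact z1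
  have z4 : A2 * JmatR n * A1 = 0 := by
    have h := hR2
    rw [z2] at h
    exact neg_eq_zero.mp h.symm
  -- identify the real and imaginary parts of N
  have hNA : N = -(Jmat n * A) := by
    rw [hAdef, ← mul_assoc, hJJ]
    simp
  have hNsplit : N = (-(JmatR n * A1)).map (⇑f)
      + Complex.I • ((-(JmatR n * A2)).map (⇑f)) := by
    rw [Statement11Aux.map_neg', Statement11Aux.map_neg']
    conv_lhs => rw [hNA, hsplitA, ← hJR]
    rw [Matrix.mul_add, Matrix.mul_smul, ← Matrix.map_mul, ← Matrix.map_mul]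
    rw [neg_add, smul_neg]
  obtain ⟨hX, hY⟩ := Statement11Aux.split_unique N _ _ hNsplit
  refine ⟨?_, ?_, ?_, ?_, ?_, ?_⟩
  · rw [hX, neg_mul_neg, mul_assoc (JmatR n) A1 (JmatR n * A1),
      ← mul_assoc A1 (JmatR n) A1, z1, mul_zero]
  · rw [hY, neg_mul_neg, mul_assoc (JmatR n) A2 (JmatR n * A2),
      ← mul_assoc A2 (JmatR n) A2, z3, mul_zero]
  · rw [hX, hY, neg_mul_neg, mul_assoc (JmatR n) A1 (JmatR n * A2),
      ← mul_assoc A1 (JmatR n) A2, z2, mul_zero]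
  · rw [hX, hY, neg_mul_neg, mul_assoc (JmatR n) A2 (JmatR n * A1),
      ← mul_assoc A2 (JmatR n) A1, z4, mul_zero]
  · rw [hX, Matrix.transpose_neg, Matrix.transpose_mul, hA1T, hJRT]
    rw [mul_neg A1, neg_neg, mul_assoc A1, hJRJR, mul_neg_one]
    rw [mul_neg (JmatR n), ← mul_assoc (JmatR n) (JmatR n) A1, hJRJR, neg_one_mul, neg_neg]
    abel
  · rw [hY, Matrix.transpose_neg, Matrix.transpose_mul, hA2T, hJRT]
    rw [mul_neg A2, neg_neg, mul_assoc A2, hJRJR, mul_neg_one]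
    rw [mul_neg (JmatR n), ← mul_assoc (JmatR n) (JmatR n) A2, hJRJR, neg_one_mul, neg_neg]
    abel
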